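/- With X, {e_k; f_k}, Q_n, Φ_r as above: if x ∈ X and N ∈ ℕ satisfy ‖Q_N x‖ ≤ r, then Q_n Φ_r(x) = Q_n x for all n ≥ N. -/
import Mathlib


open Filter Finset Topology

/-- The tail projection `Q_{n+1} = I - P_n` associated to a Schauder basis system,
where `P_n x = ∑_{k<n} f_k(x) e_k`.  Thus `tailProj f e n` is the paper's `Q_{n+1}`
and also its `R_n`. -/
noncomputable def tailProj {X : Type*} [NormedAddCommGroup X] [NormedSpace ℝ X]
    (f : ℕ → X →L[ℝ] ℝ) (e : ℕ → X) (n : ℕ) : X →L[ℝ] X :=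
  ContinuousLinearMap.id ℝ X - ∑ k ∈ Finset.range n, (f k).smulRight (e k)

/-- The piecewise-linear cutoff function `φ_r`: equal to `1` on `[-r, r]`,
`0` outside `(-2r, 2r)`, and `2 - |t|/r` in between. -/
noncomputable def phi (r t : ℝ) : ℝ :=
  if |t| ≤ r then 1 else if |t| ≤ 2 * r then 2 - |t| / r else 0

/-- If `‖Q_N x‖ ≤ r` then `Q_n Φ_r(x) = Q_n x` for all `n ≥ N`. -/
theorem Phi_tail_identity
    {X : Type*} [NormedAddCommGroup X] [NormedSpace ℝ X] [CompleteSpace X]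
    (e : ℕ → X) (f : ℕ → X →L[ℝ] ℝ)
    (hexp : ∀ x : X, Tendsto (fun n => ∑ k ∈ Finset.range n, f k x • e k) atTop (𝓝 x))
    (hbi : ∀ k j, f k (e j) = if k = j then (1 : ℝ) else 0)
    (hR : ∀ n, 1 ≤ n → ‖tailProj f e n‖ = 1)
    (r : ℝ) (hr : 0 < r) (Φ : X → X)
    (hΦ : ∀ x : X, Tendsto
      (fun n => ∑ k ∈ Finset.range n, phi r ‖tailProj f e k x‖ • (f k x • e k))
      atTop (𝓝 (Φ x)))
    (x : X) (N : ℕ) (hx : ‖tailProj f e N x‖ ≤ r) :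
    ∀ n, N ≤ n → tailProj f e n (Φ x) = tailProj f e n x := by
  intro n hn
  have hQ : ∀ m (y : X), tailProj f e m y = y - ∑ k ∈ Finset.range m, f k y • e k := by
    intro m y
    simp [tailProj, ContinuousLinearMap.sum_apply]
  have hQe : ∀ m k, k < m → tailProj f e m (e k) = 0 := by
    intro m k hk
    rw [hQ]
    have h : ∑ j ∈ Finset.range m, f j (e k) • e j = e k := by
      rw [Finset.sum_congr rfl fun j _ => by rw [hbi j k]]
      simp [ite_smul, Finset.mem_range.mpr hk]
    rw [h, sub_self]
  have hnorm : ∀ k, N ≤ k → ‖tailProj f e k x‖ ≤ r := by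
    intro k hk
    have hcomp : tailProj f e k (tailProj f e N x) = tailProj f e k x := by
      conv_lhs => rw [hQ N x]
      rw [map_sub, map_sum]
      have h : ∀ j ∈ Finset.range N, tailProj f e k (f j x • e j) = 0 := by
        intro j hj
        rw [map_smul, hQe k j (lt_of_lt_of_le (Finset.mem_range.mp hj) hk), smul_zero]
      rw [Finset.sum_congr rfl h, Finset.sum_const_zero, sub_zero]
    rcases Nat.eq_zero_or_pos k with hk0 | hk1
    · have hN0 : N = 0 := Nat.le_zero.mp (hk0 ▸ hk)
      rw [hk0, ← hN0]; exact hx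
    · calc ‖tailProj f e k x‖ = ‖tailProj f e k (tailProj f e N x)‖ := by rw [hcomp]
        _ ≤ ‖tailProj f e k‖ * ‖tailProj f e N x‖ := (tailProj f e k).le_opNorm _
        _ = ‖tailProj f e N x‖ := by rw [hR k hk1, one_mul]
        _ ≤ r := hx
  have hphi : ∀ k, N ≤ k → phi r ‖tailProj f e k x‖ = 1 := by
    intro k hk
    unfold phi
    rw [abs_of_nonneg (norm_nonneg _), if_pos (hnorm k hk)]
  set C := ∑ k ∈ Finset.range N, (phi r ‖tailProj f e k x‖ - 1) • (f k x • e k) with hC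
  have key : ∀ m, N ≤ m →
      ∑ k ∈ Finset.range m, phi r ‖tailProj f e k x‖ • (f k x • e k)
        = (∑ k ∈ Finset.range m, f k x • e k) + C := by
    intro m hm
    have h1 : ∑ k ∈ Finset.range m, phi r ‖tailProj f e k x‖ • (f k x • e k)
        = ∑ k ∈ Finset.range m,
            (f k x • e k + (phi r ‖tailProj f e k x‖ - 1) • (f k x • e k)) := by
      refine Finset.sum_congr rfl fun k _ => ?_
      module
    rw [h1, Finset.sum_add_distrib]
    congr 1
    rw [hC]
    symm
    refine Finset.sum_subset (Finset.range_subset_range.mpr hm) fun k _ hk => ?_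
    rw [hphi k (le_of_not_gt fun h => hk (Finset.mem_range.mpr h))]
    simp
  have hΦx : Φ x = x + C := by
    refine tendsto_nhds_unique (hΦ x) ?_
    have h1 : Tendsto (fun m => (∑ k ∈ Finset.range m, f k x • e k) + C) atTop (𝓝 (x + C)) :=
      (hexp x).add tendsto_const_nhds
    exact h1.congr' (Filter.eventually_atTop.mpr ⟨N, fun m hm => (key m hm).symm⟩)
  rw [hΦx, map_add]
  have hC0 : tailProj f e n C = 0 := by
    rw [hC, map_sum]
    refine Finset.sum_eq_zero fun k hk => ?_
    rw [map_smul, map_smul, hQe n k (lt_of_lt_of_le (Finset.mem_range.mp hk) hn),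
      smul_zero, smul_zero]
  rw [hC0, add_zero]
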